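/- Let G be a finite, connected, S_{2,5}-free simple graph with minimum degree at least 3, and suppose G has a vertex v of degree 7. Then the vertex set of G equals the closed neighborhood N[v] of v; in particular G has exactly 8 vertices. -/

import Mathlib

/-- `G` contains the double star `S_{2,5}` as a subgraph: there is a backbone edge `u v`,
two further neighbors of `u` and five further neighbors of `v`, all nine vertices distinct. -/
def ContainsS25 {V : Type*} (G : SimpleGraph V) : Prop :=
  ∃ u v a₁ a₂ b₁ b₂ b₃ b₄ b₅ : V,
    ([u, v, a₁, a₂, b₁, b₂, b₃, b₄, b₅] : List V).Nodup ∧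
    G.Adj u v ∧ G.Adj u a₁ ∧ G.Adj u a₂ ∧
    G.Adj v b₁ ∧ G.Adj v b₂ ∧ G.Adj v b₃ ∧ G.Adj v b₄ ∧ G.Adj v b₅

private lemma walk_boundary {V : Type*} (G : SimpleGraph V) (S : Set V) :
    ∀ {a b : V}, G.Walk a b → a ∈ S → b ∉ S →
      ∃ p q, p ∈ S ∧ q ∉ S ∧ G.Adj p q := by
  intro a b w
  induction w with
  | nil => intro h h'; exact absurd h h'
  | @cons a c b h p ih =>
    intro ha hb
    by_cases hc : c ∈ S
    · exact ih hc hb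
    · exact ⟨a, c, ha, hc, h⟩

theorem stmt_3 {V : Type*} [Fintype V] [DecidableEq V] (G : SimpleGraph V)
    [DecidableRel G.Adj] (hconn : G.Connected) (hfree : ¬ ContainsS25 G)
    (hmin : ∀ w : V, 3 ≤ G.degree w) (v : V) (hdv : G.degree v = 7) :
    (insert v (G.neighborFinset v) : Finset V) = Finset.univ ∧ Fintype.card V = 8 := by
  have hmain : (insert v (G.neighborFinset v) : Finset V) = Finset.univ := by
    by_contra hne
    obtain ⟨z, hz⟩ : ∃ z, z ∉ (insert v (G.neighborFinset v) : Finset V) := by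
      by_contra h
      push_neg at h
      exact hne (Finset.eq_univ_of_forall h)
    obtain ⟨u, w, hu, hw, huw⟩ := walk_boundary G
      (↑(insert v (G.neighborFinset v) : Finset V) : Set V)
      (hconn v z).some (by simp) (by simpa using hz)
    -- u ∈ insert v N(v), w not
    have hwv : w ≠ v := fun h => hw (by simp [h])
    have hwnv : w ∉ G.neighborFinset v := fun h => hw (by simp [(SimpleGraph.mem_neighborFinset _ _ _).mp h])
    have huv : u ∈ G.neighborFinset v := by
      simp only [Finset.coe_insert, Set.mem_insert_iff, Finset.mem_coe] at hu
      rcases hu with rfl | h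
      · exact absurd (by simp [huw] :
          (w : V) ∈ (↑(insert u (G.neighborFinset u)) : Set V)) hw
      · exact h
    have hadjvu : G.Adj v u := (SimpleGraph.mem_neighborFinset _ _ _).mp huv
    -- find x : third neighbor of u
    have hcard2 : ({v, w} : Finset V).card ≤ 2 := Finset.card_le_two
    have hx1 : 0 < (G.neighborFinset u \ {v, w}).card := by
      have h1 := Finset.card_le_card_sdiff_add_card (s := G.neighborFinset u) (t := {v, w})
      have h2 : 3 ≤ (G.neighborFinset u).card := by
        rw [← G.card_neighborFinset_eq_degree] at *; exact hmin u
      omega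
    obtain ⟨x, hx⟩ := Finset.card_pos.mp hx1
    simp only [Finset.mem_sdiff, Finset.mem_insert, Finset.mem_singleton, not_or] at hx
    obtain ⟨hxu, hxv, hxw⟩ := hx
    have hadjux : G.Adj u x := (SimpleGraph.mem_neighborFinset _ _ _).mp hxu
    -- pick 5 neighbors of v avoiding u and x
    have hT : 5 ≤ (G.neighborFinset v \ {u, x}).card := by
      have h1 := Finset.card_le_card_sdiff_add_card (s := G.neighborFinset v) (t := {u, x})
      have hc2 : ({u, x} : Finset V).card ≤ 2 := Finset.card_le_two
      rw [G.card_neighborFinset_eq_degree, hdv] at h1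
      omega
    obtain ⟨t, hts, htc⟩ := Finset.exists_subset_card_eq hT
    have hlen : t.toList.length = 5 := by rw [Finset.length_toList, htc]
    have hnd := t.nodup_toList
    obtain ⟨b₁, b₂, b₃, b₄, b₅, hL⟩ :
        ∃ b₁ b₂ b₃ b₄ b₅, t.toList = [b₁, b₂, b₃, b₄, b₅] := by
      rcases h : t.toList with _ | ⟨b₁, _ | ⟨b₂, _ | ⟨b₃, _ | ⟨b₄, _ | ⟨b₅, _ | ⟨c, l⟩⟩⟩⟩⟩⟩ <;>
        simp_all
    have hmem : ∀ b ∈ ([b₁, b₂, b₃, b₄, b₅] : List V),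
        b ∈ G.neighborFinset v \ {u, x} := by
      intro b hb
      exact hts (Finset.mem_toList.mp (hL ▸ hb))
    have hprops : ∀ b ∈ ([b₁, b₂, b₃, b₄, b₅] : List V),
        G.Adj v b ∧ b ≠ u ∧ b ≠ x ∧ b ≠ v ∧ b ≠ w := by
      intro b hb
      have := hmem b hb
      simp only [Finset.mem_sdiff, Finset.mem_insert, Finset.mem_singleton, not_or,
        SimpleGraph.mem_neighborFinset] at this
      exact ⟨this.1, this.2.1, this.2.2, this.1.ne', fun h => hwnv (h ▸ by
        simpa using this.1)⟩
    rw [hL] at hnd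
    have p1 := hprops b₁ (by simp)
    have p2 := hprops b₂ (by simp)
    have p3 := hprops b₃ (by simp)
    have p4 := hprops b₄ (by simp)
    have p5 := hprops b₅ (by simp)
    apply hfree
    refine ⟨u, v, w, x, b₁, b₂, b₃, b₄, b₅, ?_, hadjvu.symm, huw, hadjux,
      p1.1, p2.1, p3.1, p4.1, p5.1⟩
    have hnd' := hnd
    simp only [List.nodup_cons, List.mem_cons, List.not_mem_nil, or_false,
      List.nodup_nil, and_true, not_or, List.mem_singleton] at hnd' ⊢
    refine ⟨⟨hadjvu.ne', huw.ne, hadjux.ne, (p1.2.1).symm, (p2.2.1).symm,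
        (p3.2.1).symm, (p4.2.1).symm, (p5.2.1).symm⟩, ?_, ?_, ?_, ?_⟩
    · exact ⟨hwv.symm, (Ne.symm hxv), (p1.2.2.2.1).symm, (p2.2.2.2.1).symm,
        (p3.2.2.2.1).symm, (p4.2.2.2.1).symm, (p5.2.2.2.1).symm⟩
    · exact ⟨(Ne.symm hxw), (p1.2.2.2.2).symm, (p2.2.2.2.2).symm, (p3.2.2.2.2).symm,
        (p4.2.2.2.2).symm, (p5.2.2.2.2).symm⟩
    · exact ⟨(p1.2.2.1).symm, (p2.2.2.1).symm, (p3.2.2.1).symm, (p4.2.2.1).symm,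
        (p5.2.2.1).symm⟩
    · exact hnd'
  refine ⟨hmain, ?_⟩
  have := Finset.card_insert_of_notMem (G.notMem_neighborFinset_self v)
  rw [← Finset.card_univ, ← hmain, this, G.card_neighborFinset_eq_degree, hdv]
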